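/- Define n₁ = 1 and n_{k+1} = 2^{2n_k + 2}. Let A_k = {n_k + 1, n_k + 2, ..., n_k + 2^{n_k + 1}} ∪ {3·2^{n_k}, 4·2^{n_k}, ..., (2^{n_k+1} + 2)·2^{n_k}} and A = ⋃_k A_k. Then for every integer n ≥ 4, there exist a, b ∈ A with a < b < n such that 2b = a + n. -/

import Mathlib

/-- The recursive sequence: n₁ = 1, n_{k+1} = 2^{2 n_k + 2} (indexed from 0). -/
def nSeq : ℕ → ℕ
  | 0 => 1
  | k + 1 => 2 ^ (2 * nSeq k + 2)

/-- A_k = [n_k+1, n_k+2^{n_k+1}] ∪ {j·2^{n_k} : 3 ≤ j ≤ 2^{n_k+1}+2}. -/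
def Ablock (k : ℕ) : Set ℕ :=
  {m | (nSeq k + 1 ≤ m ∧ m ≤ nSeq k + 2 ^ (nSeq k + 1)) ∨
       ∃ j : ℕ, 3 ≤ j ∧ j ≤ 2 ^ (nSeq k + 1) + 2 ∧ m = j * 2 ^ (nSeq k)}

lemma nSeq_ge (k : ℕ) : k + 1 ≤ nSeq k := by
  induction k with
  | zero => simp [nSeq]
  | succ k ih =>
    have h := Nat.lt_two_pow_self (n := 2 * nSeq k + 2)
    show k + 2 ≤ 2 ^ (2 * nSeq k + 2)
    omega

lemma two_pow_ge (m : ℕ) (hm : 1 ≤ m) : m + 3 ≤ 2 ^ (m + 1) := by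
  induction m with
  | zero => omega
  | succ m ih =>
    rcases Nat.eq_or_lt_of_le hm with h | h
    · simp [← h]
    · have h1 : 1 ≤ m := by omega
      have := ih h1
      have : 2 ^ (m + 2) = 2 * 2 ^ (m + 1) := by ring
      omega

lemma mem_left {k a m : ℕ} (hm : nSeq k = m) (h1 : m + 1 ≤ a) (h2 : a ≤ m + 2 ^ (m + 1)) :
    a ∈ ⋃ i, Ablock i :=
  Set.mem_iUnion.mpr ⟨k, Or.inl ⟨by rw [hm]; exact h1, by rw [hm]; exact h2⟩⟩

lemma mem_right {k j m b : ℕ} (hm : nSeq k = m) (h1 : 3 ≤ j) (h2 : j ≤ 2 ^ (m + 1) + 2)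
    (hb : b = j * 2 ^ m) : b ∈ ⋃ i, Ablock i :=
  Set.mem_iUnion.mpr ⟨k, Or.inr ⟨j, h1, by rw [hm]; exact h2, by rw [hm]; exact hb⟩⟩

theorem stmt_2 :
    ∀ n : ℕ, 4 ≤ n →
      ∃ a ∈ ⋃ k, Ablock k, ∃ b ∈ ⋃ k, Ablock k, a < b ∧ b < n ∧ 2 * b = a + n := by
  intro n hn
  -- choose the largest k with nSeq k + 3 ≤ n
  obtain ⟨k, hkdef⟩ : ∃ k, Nat.findGreatest (fun k => nSeq k + 3 ≤ n) n = k := ⟨_, rfl⟩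
  have hP0 : nSeq 0 + 3 ≤ n := by show 1 + 3 ≤ n; omega
  have hPk : nSeq k + 3 ≤ n := by
    have := Nat.findGreatest_spec (P := fun k => nSeq k + 3 ≤ n) (Nat.zero_le n) hP0
    rwa [hkdef] at this
  have hkge := nSeq_ge k
  have hkn : k + 1 ≤ n := by omega
  have hnot : ¬ (nSeq (k + 1) + 3 ≤ n) :=
    Nat.findGreatest_is_greatest (P := fun k => nSeq k + 3 ≤ n) (by omega) hkn
  have hn2' : nSeq (k + 1) = 2 ^ (2 * nSeq k + 2) := rfl
  obtain ⟨m, hmdef⟩ : ∃ m, nSeq k = m := ⟨_, rfl⟩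
  have hn2 : n ≤ 2 ^ (2 * m + 2) + 2 := by rw [← hmdef]; omega
  rw [hmdef] at hPk
  have hm1 : 1 ≤ m := by omega
  obtain ⟨P, hPdef⟩ : ∃ P, 2 ^ (m + 1) = P := ⟨_, rfl⟩
  have hmP : m + 3 ≤ P := by rw [← hPdef]; exact two_pow_ge m hm1
  have hP2 : P = 2 ^ m * 2 := by rw [← hPdef, pow_succ]
  have hPP : 2 ^ (2 * m + 2) = P * P := by
    rw [← hPdef, ← pow_add]; ring_nf
  rw [hPP] at hn2
  by_cases hcase : n ≤ 2 * m + P + 1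
  · -- Case A: both a and b in the interval part
    have ht : m + 1 ≤ n := by omega
    obtain ⟨t, htdef⟩ : ∃ t, n - m - 1 = t := ⟨_, rfl⟩
    have ht2 : 2 ≤ t := by omega
    refine ⟨m + 1 + t % 2, mem_left hmdef (by omega) (by rw [hPdef]; omega),
            m + 1 + t % 2 + t / 2, mem_left hmdef (by omega) (by rw [hPdef]; omega),
            by omega, by omega, by omega⟩
  · -- Case B: b is a multiple of 2^m
    push_neg at hcase
    obtain ⟨j, hjdef⟩ : ∃ j, (n + m + P) / P = j := ⟨_, rfl⟩
    have hPpos : 0 < P := by omega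
    have hdm := Nat.div_add_mod (n + m + P) P
    have hmodlt := Nat.mod_lt (n + m + P) hPpos
    obtain ⟨c, hcdef⟩ : ∃ c, P * j = c := ⟨_, rfl⟩
    rw [hjdef] at hdm
    have hc1 : c ≤ n + m + P := by omega
    have hc2 : n + m + 1 ≤ c := by omega
    have hj2 : 2 ≤ j := by
      by_contra h
      have h1 : j ≤ 1 := by omega
      have h2 : P * j ≤ P * 1 := Nat.mul_le_mul_left P h1
      omega
    have hjle : j ≤ P + 2 := by
      have h1 : P * j ≤ P * (P + 2) := by
        have h2 : P * (P + 2) = P * P + 2 * P := by ring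
        omega
      exact Nat.le_of_mul_le_mul_left h1 hPpos
    have h2b : 2 * (j * 2 ^ m) = c := by rw [← hcdef, hP2]; ring
    refine ⟨c - n, mem_left hmdef (by omega) (by rw [hPdef]; omega),
            j * 2 ^ m, ?_, by omega, by omega, by omega⟩
    rcases Nat.eq_or_lt_of_le hj2 with hj | hj
    · -- j = 2 : b = 2^{m+1} lies in the interval
      have hb : j * 2 ^ m = P := by rw [← hj, hP2]; ring
      rw [hb]
      exact mem_left hmdef (by omega) (by rw [hPdef]; omega)
    · exact mem_right hmdef (by omega) (by rw [hPdef]; omega) rfl
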